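/- Let f ∈ C¹([0,∞)) ∩ C³((0,∞)), extended oddly to ℝ, satisfy |f^{(i)}(s)| ≤ A₂|s|^{2*−(i+1)} for i = −1,0,1,2,3 (with f^{(−1)} = F). Then there exists σ ∈ (1/2, 1], namely σ = min{2*/4, 1}, with the property: for any C₅ ≥ 1 there is C₆ > 0 such that |f(u+v) − f(u) − f(v)| ≤ C₆|uv|^σ and |F(u+v) − F(u) − F(v) − f(u)v − f(v)u| ≤ C₆|uv|^{2σ} for all u, v ∈ ℝ with |u|, |v| ≤ C₅. -/

import Mathlib

open MeasureTheory Real Filter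
open scoped Topology

/-- Lemma 4.7 (adapted from Ackermann–Clapp–Pacella): with
`σ = min{2*/4, 1} ∈ (1/2, 1]`, for every `C₅ ≥ 1` there is `C₆ > 0` such that
`|f(u+v)-f(u)-f(v)| ≤ C₆|uv|^σ` and
`|F(u+v)-F(u)-F(v)-f(u)v-f(v)u| ≤ C₆|uv|^{2σ}` for `|u|,|v| ≤ C₅`. -/
theorem stmt11 (N : ℕ) (hN : 3 ≤ N) (p : ℝ) (hp : p = 2 * N / ((N : ℝ) - 2))
    (A₂ : ℝ) (hA₂ : 0 < A₂)
    (f : ℝ → ℝ) (hodd : ∀ s : ℝ, f (-s) = -f s)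
    (hf1 : ContDiffOn ℝ 1 f (Set.Ici 0)) (hf3 : ContDiffOn ℝ 3 f (Set.Ioi 0))
    (F : ℝ → ℝ) (hFdef : ∀ s : ℝ, F s = ∫ t in (0 : ℝ)..s, f t)
    (hFb : ∀ s : ℝ, |F s| ≤ A₂ * |s| ^ p)
    (hfb : ∀ i : ℕ, i ≤ 3 → ∀ s : ℝ,
      |iteratedDeriv i f s| ≤ A₂ * |s| ^ (p - ((i : ℝ) + 1))) :
    ∃ σ : ℝ, σ ∈ Set.Ioc (1 / 2 : ℝ) 1 ∧ σ = min (p / 4) 1 ∧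
      ∀ C₅ : ℝ, 1 ≤ C₅ → ∃ C₆ > 0, ∀ u v : ℝ, |u| ≤ C₅ → |v| ≤ C₅ →
        |f (u + v) - f u - f v| ≤ C₆ * |u * v| ^ σ ∧
        |F (u + v) - F u - F v - f u * v - f v * u| ≤ C₆ * |u * v| ^ (2 * σ) := by
  have hN2 : (2:ℝ) < N := by exact_mod_cast (by omega : 2 < N)
  have hp2 : 2 < p := by
    rw [hp, lt_div_iff₀ (by linarith)]
    linarith
  set σ : ℝ := min (p / 4) 1 with hσdef
  have hσ1 : σ ≤ 1 := min_le_right _ _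
  have hσp : σ ≤ p / 4 := min_le_left _ _
  have hσhalf : 1 / 2 < σ := lt_min (by linarith) (by norm_num)
  have hσ0 : 0 < σ := by linarith
  have e5 : (0:ℝ) < p - 2 := by linarith
  have e2 : 0 ≤ p - 1 - 2 * σ := by linarith
  have e4 : 0 ≤ p - 4 * σ := by linarith
  -- basic values
  have hf0 : f 0 = 0 := by have := hodd 0; rw [neg_zero] at this; linarith
  have hfneg : ∀ y : ℝ, f y = -f (-y) := by
    intro y; have := hodd (-y); rw [neg_neg] at this; linarith
  have hF0 : F 0 = 0 := by rw [hFdef]; simp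
  -- differentiability of f on all of ℝ
  have hdiffOn : DifferentiableOn ℝ f (Set.Ici 0) := hf1.differentiableOn one_ne_zero
  have hposd : ∀ x : ℝ, 0 < x → DifferentiableAt ℝ f x := fun x hx =>
    hdiffOn.differentiableAt (Ici_mem_nhds hx)
  have hfun : (fun y : ℝ => -f (-y)) = f := funext fun y => (hfneg y).symm
  have hdiffAt : ∀ x : ℝ, DifferentiableAt ℝ f x := by
    intro x
    rcases lt_trichotomy x 0 with hx | hx | hx
    · have h1 : DifferentiableAt ℝ (fun y : ℝ => -f (-y)) x := by
        have h2 : DifferentiableAt ℝ (fun y : ℝ => f (-y)) x :=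
          (hposd (-x) (by linarith)).comp x (differentiable_neg x)
        exact h2.neg
      rw [hfun] at h1; exact h1
    · subst hx
      set d := derivWithin f (Set.Ici 0) 0 with hd
      have h₁ : HasDerivWithinAt f d (Set.Ici 0) 0 :=
        (hdiffOn 0 Set.self_mem_Ici).hasDerivWithinAt
      have hneg : HasDerivWithinAt (fun y : ℝ => -y) (-1) (Set.Iic 0) 0 :=
        (hasDerivAt_neg (0:ℝ)).hasDerivWithinAt
      have hmap : Set.MapsTo (fun y : ℝ => -y) (Set.Iic 0) (Set.Ici 0) :=
        fun y hy => by simpa using neg_nonneg.2 (Set.mem_Iic.1 hy)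
      have h₁' : HasDerivWithinAt f d (Set.Ici 0) ((fun y : ℝ => -y) 0) := by
        simpa using h₁
      have h₂' : HasDerivWithinAt (fun y : ℝ => f (-y)) (d * -1) (Set.Iic 0) 0 :=
        HasDerivWithinAt.comp 0 h₁' hneg hmap
      have h₂'' : HasDerivWithinAt (fun y : ℝ => -f (-y)) (-(d * -1)) (Set.Iic 0) 0 := h₂'.neg
      have h₂ : HasDerivWithinAt f d (Set.Iic 0) 0 := by
        rw [hfun] at h₂''; simpa using h₂''
      have h₃ : HasDerivWithinAt f d (Set.Iic 0 ∪ Set.Ici 0) 0 := h₂.union h₁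
      rw [Set.Iic_union_Ici] at h₃
      rw [hasDerivWithinAt_univ] at h₃
      exact h₃.differentiableAt
    · exact hposd x hx
  have hf'at : ∀ x : ℝ, HasDerivAt f (deriv f x) x := fun x => (hdiffAt x).hasDerivAt
  have hfc : Continuous f := continuous_iff_continuousAt.mpr fun x => (hdiffAt x).continuousAt
  have hF' : ∀ x : ℝ, HasDerivAt F (f x) x := by
    intro x
    have h1 : HasDerivAt (fun s : ℝ => ∫ t in (0:ℝ)..s, f t) (f x) x :=
      (hfc.integral_hasStrictDerivAt 0 x).hasDerivAt
    have h2 : F = fun s : ℝ => ∫ t in (0:ℝ)..s, f t := funext hFdef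
    rw [h2]; exact h1
  -- bound on the derivative
  have hd : ∀ s : ℝ, |deriv f s| ≤ A₂ * |s| ^ (p - 2) := by
    intro s
    have h := hfb 1 (by norm_num) s
    rw [iteratedDeriv_one] at h
    norm_num at h
    exact h
  -- membership in uIoc gives abs bound
  have habs_mem : ∀ a x : ℝ, x ∈ Set.uIoc (0:ℝ) a → |x| ≤ |a| := by
    intro a x hx
    rw [Set.mem_uIoc] at hx
    rcases hx with ⟨h1, h2⟩ | ⟨h1, h2⟩
    · rw [abs_of_pos h1]; exact h2.trans (le_abs_self a)
    · rw [abs_of_nonpos h2]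
      calc -x ≤ -a := by linarith
        _ ≤ |a| := neg_le_abs a
  -- interval integrability of shifted derivative
  have hint : ∀ c a b : ℝ, IntervalIntegrable (fun t => deriv f (c + t)) volume a b := by
    intro c a b
    rw [intervalIntegrable_iff]
    apply Measure.integrableOn_of_bounded (M := A₂ * (|c| + max |a| |b|) ^ (p - 2))
    · exact measure_Ioc_lt_top.ne
    · exact ((measurable_deriv f).comp (measurable_const_add c)).aestronglyMeasurable
    · rw [ae_restrict_iff' measurableSet_uIoc]
      apply ae_of_all
      intro x hx
      have hx1 : |x| ≤ max |a| |b| := by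
        rw [Set.mem_uIoc] at hx
        rcases hx with ⟨h1, h2⟩ | ⟨h1, h2⟩
        · rw [abs_le]; constructor
          · have := neg_abs_le a; have := le_max_left |a| |b|; linarith
          · have := le_abs_self b; have := le_max_right |a| |b|; linarith
        · rw [abs_le]; constructor
          · have := neg_abs_le b; have := le_max_right |a| |b|; linarith
          · have := le_abs_self a; have := le_max_left |a| |b|; linarith
      have hcx : |c + x| ≤ |c| + max |a| |b| := by
        calc |c + x| ≤ |c| + |x| := abs_add_le c x
          _ ≤ |c| + max |a| |b| := by linarith
      calc ‖deriv f (c + x)‖ = |deriv f (c + x)| := rfl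
        _ ≤ A₂ * |c + x| ^ (p - 2) := hd (c + x)
        _ ≤ A₂ * (|c| + max |a| |b|) ^ (p - 2) :=
            mul_le_mul_of_nonneg_left
              (Real.rpow_le_rpow (abs_nonneg _) hcx e5.le) hA₂.le
  have hintd : ∀ a b : ℝ, IntervalIntegrable (deriv f) volume a b := by
    intro a b; have := hint 0 a b; simpa using this
  -- key pointwise inequality 1
  have key1 : ∀ u v : ℝ, |v| ≤ |u| →
      |f (u + v) - f u - f v| ≤ (A₂ * (2 ^ (p - 2) + 1) * |u| ^ (p - 2)) * |v| := by
    intro u v huv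
    have hder : ∀ t : ℝ, HasDerivAt (fun t => f (u + t) - f t)
        (deriv f (u + t) - deriv f t) t := by
      intro t
      have h1 : HasDerivAt (fun t : ℝ => f (u + t)) (deriv f (u + t)) t := by
        have := (hf'at (u + t)).comp t ((hasDerivAt_id t).const_add u)
        simpa [Function.comp_def] using this
      exact h1.sub (hf'at t)
    have hint2 : IntervalIntegrable (fun t => deriv f (u + t) - deriv f t) volume 0 v :=
      (hint u 0 v).sub (hintd 0 v)
    have hrepr := intervalIntegral.integral_eq_sub_of_hasDerivAt
      (f := fun t => f (u + t) - f t) (f' := fun t => deriv f (u + t) - deriv f t)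
      (fun t _ => hder t) hint2
    have hval : f (u + v) - f u - f v
        = ∫ t in (0:ℝ)..v, (deriv f (u + t) - deriv f t) := by
      rw [hrepr]; simp only [hf0, hF0, add_zero]; ring
    rw [hval]
    have hb : ∀ t ∈ Set.uIoc (0:ℝ) v, ‖deriv f (u + t) - deriv f t‖
        ≤ A₂ * (2 ^ (p - 2) + 1) * |u| ^ (p - 2) := by
      intro t ht
      have ht' : |t| ≤ |v| := habs_mem v t ht
      have h1 : |deriv f (u + t)| ≤ A₂ * (2 ^ (p - 2) * |u| ^ (p - 2)) := by
        have hb1 : |u + t| ≤ 2 * |u| := by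
          have := abs_add_le u t; linarith
        calc |deriv f (u + t)| ≤ A₂ * |u + t| ^ (p - 2) := hd (u + t)
          _ ≤ A₂ * (2 * |u|) ^ (p - 2) :=
              mul_le_mul_of_nonneg_left (Real.rpow_le_rpow (abs_nonneg _) hb1 e5.le) hA₂.le
          _ = A₂ * (2 ^ (p - 2) * |u| ^ (p - 2)) := by
              rw [Real.mul_rpow (by norm_num) (abs_nonneg u)]
      have h2 : |deriv f t| ≤ A₂ * |u| ^ (p - 2) := by
        calc |deriv f t| ≤ A₂ * |t| ^ (p - 2) := hd t
          _ ≤ A₂ * |u| ^ (p - 2) :=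
            mul_le_mul_of_nonneg_left
              (Real.rpow_le_rpow (abs_nonneg _) (ht'.trans huv) e5.le) hA₂.le
      have h3 : ‖deriv f (u + t) - deriv f t‖ ≤ |deriv f (u + t)| + |deriv f t| :=
        abs_sub _ _
      nlinarith [h1, h2, h3]
    have := intervalIntegral.norm_integral_le_of_norm_le_const hb
    simpa using this
  -- key pointwise inequality 2
  have key2 : ∀ u v : ℝ, |v| ≤ |u| →
      |F (u + v) - F u - F v - f u * v - f v * u| ≤
        (A₂ * (2 ^ (p - 2) + 1) * |u| ^ (p - 2) * |v| + A₂ * |u| * |v| ^ (p - 2)) * |v| := by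
    intro u v huv
    have hder : ∀ t : ℝ, HasDerivAt (fun t => F (u + t) - f u * t - F t - u * f t)
        (f (u + t) - f u - f t - u * deriv f t) t := by
      intro t
      have h1 : HasDerivAt (fun t : ℝ => F (u + t)) (f (u + t)) t := by
        have := (hF' (u + t)).comp t ((hasDerivAt_id t).const_add u)
        simpa [Function.comp_def] using this
      have h2 : HasDerivAt (fun t : ℝ => f u * t) (f u) t := by
        simpa using (hasDerivAt_id t).const_mul (f u)
      have h3 : HasDerivAt (fun t : ℝ => u * f t) (u * deriv f t) t := (hf'at t).const_mul u
      exact ((h1.sub h2).sub (hF' t)).sub h3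
    have hintψ : IntervalIntegrable
        (fun t => f (u + t) - f u - f t - u * deriv f t) volume 0 v := by
      apply IntervalIntegrable.sub
      apply IntervalIntegrable.sub
      apply IntervalIntegrable.sub
      · exact (hfc.comp (continuous_const.add continuous_id)).intervalIntegrable 0 v
      · exact intervalIntegrable_const
      · exact hfc.intervalIntegrable 0 v
      · exact (hintd 0 v).const_mul u
    have hrepr := intervalIntegral.integral_eq_sub_of_hasDerivAt
      (f := fun t => F (u + t) - f u * t - F t - u * f t)
      (f' := fun t => f (u + t) - f u - f t - u * deriv f t)
      (fun t _ => hder t) hintψ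
    have hval : F (u + v) - F u - F v - f u * v - f v * u
        = ∫ t in (0:ℝ)..v, (f (u + t) - f u - f t - u * deriv f t) := by
      rw [hrepr]; simp only [hf0, hF0, add_zero, mul_zero]; ring
    rw [hval]
    have hb : ∀ t ∈ Set.uIoc (0:ℝ) v, ‖f (u + t) - f u - f t - u * deriv f t‖
        ≤ A₂ * (2 ^ (p - 2) + 1) * |u| ^ (p - 2) * |v| + A₂ * |u| * |v| ^ (p - 2) := by
      intro t ht
      have ht' : |t| ≤ |v| := habs_mem v t ht
      have hg := key1 u t (ht'.trans huv)
      have hft : |deriv f t| ≤ A₂ * |v| ^ (p - 2) := by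
        calc |deriv f t| ≤ A₂ * |t| ^ (p - 2) := hd t
          _ ≤ A₂ * |v| ^ (p - 2) :=
            mul_le_mul_of_nonneg_left
              (Real.rpow_le_rpow (abs_nonneg _) ht' e5.le) hA₂.le
      have h4 : ‖f (u + t) - f u - f t - u * deriv f t‖
          ≤ |f (u + t) - f u - f t| + |u * deriv f t| := abs_sub _ _
      have h5 : |u * deriv f t| = |u| * |deriv f t| := abs_mul _ _
      have hK0 : (0:ℝ) ≤ A₂ * (2 ^ (p - 2) + 1) * |u| ^ (p - 2) := by positivity
      have h6 : |f (u + t) - f u - f t| ≤ A₂ * (2 ^ (p - 2) + 1) * |u| ^ (p - 2) * |v| := by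
        calc |f (u + t) - f u - f t|
            ≤ A₂ * (2 ^ (p - 2) + 1) * |u| ^ (p - 2) * |t| := hg
          _ ≤ A₂ * (2 ^ (p - 2) + 1) * |u| ^ (p - 2) * |v| :=
            mul_le_mul_of_nonneg_left ht' hK0
      have h7 : |u| * |deriv f t| ≤ A₂ * |u| * |v| ^ (p - 2) := by
        calc |u| * |deriv f t| ≤ |u| * (A₂ * |v| ^ (p - 2)) :=
            mul_le_mul_of_nonneg_left hft (abs_nonneg u)
          _ = A₂ * |u| * |v| ^ (p - 2) := by ring
      rw [h5] at h4
      linarith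
    have := intervalIntegral.norm_integral_le_of_norm_le_const hb
    simpa using this
  refine ⟨σ, ⟨hσhalf, hσ1⟩, rfl, ?_⟩
  intro C₅ hC₅
  have hC₅0 : (0:ℝ) < C₅ := by linarith
  set K : ℝ := A₂ * (2 ^ (p - 2) + 1) with hKdef
  have hK : 0 < K := by positivity
  have hCp1 : 0 < C₅ ^ (p - 1 - 2 * σ) := Real.rpow_pos_of_pos hC₅0 _
  have hCp2 : 0 < C₅ ^ (p - 4 * σ) := Real.rpow_pos_of_pos hC₅0 _
  set C₆ : ℝ := K * C₅ ^ (p - 1 - 2 * σ) + (K + A₂) * C₅ ^ (p - 4 * σ) with hC₆def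
  have hC₆ : 0 < C₆ := by positivity
  -- comparison lemma
  have compare : ∀ a b m M : ℝ, 0 ≤ b → 0 ≤ a + b → 0 < m → m ≤ M → M ≤ C₅ →
      M ^ a * m ^ b ≤ C₅ ^ (a + b) := by
    intro a b m M hb hab hm hmM hMC
    have hM : 0 < M := lt_of_lt_of_le hm hmM
    rcases le_or_gt 0 a with ha | ha
    · calc M ^ a * m ^ b ≤ C₅ ^ a * C₅ ^ b :=
          mul_le_mul (Real.rpow_le_rpow hM.le hMC ha)
            (Real.rpow_le_rpow hm.le (hmM.trans hMC) hb)
            (Real.rpow_nonneg hm.le b) (Real.rpow_nonneg hC₅0.le a)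
        _ = C₅ ^ (a + b) := (Real.rpow_add hC₅0 a b).symm
    · calc M ^ a * m ^ b ≤ m ^ a * m ^ b :=
          mul_le_mul_of_nonneg_right
            (Real.rpow_le_rpow_of_nonpos hm hmM ha.le) (Real.rpow_nonneg hm.le b)
        _ = m ^ (a + b) := (Real.rpow_add hm a b).symm
        _ ≤ C₅ ^ (a + b) := Real.rpow_le_rpow hm.le (hmM.trans hMC) hab
  refine ⟨C₆, hC₆, ?_⟩
  have main : ∀ u v : ℝ, |u| ≤ C₅ → |v| ≤ C₅ → |v| ≤ |u| →
      |f (u + v) - f u - f v| ≤ C₆ * |u * v| ^ σ ∧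
      |F (u + v) - F u - F v - f u * v - f v * u| ≤ C₆ * |u * v| ^ (2 * σ) := by
    intro u v hu hv hvu
    by_cases hv0 : v = 0
    · subst hv0
      constructor
      · simp [hf0, Real.zero_rpow hσ0.ne']
      · simp [hf0, hF0, Real.zero_rpow (by positivity : (2*σ) ≠ 0)]
    · have hm : 0 < |v| := abs_pos.mpr hv0
      have hM : 0 < |u| := lt_of_lt_of_le hm hvu
      have hprod1 : |u * v| ^ σ = |u| ^ σ * |v| ^ σ := by
        rw [abs_mul, Real.mul_rpow (abs_nonneg u) (abs_nonneg v)]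
      have hprod2 : |u * v| ^ (2 * σ) = |u| ^ (2 * σ) * |v| ^ (2 * σ) := by
        rw [abs_mul, Real.mul_rpow (abs_nonneg u) (abs_nonneg v)]
      constructor
      · rw [hprod1]
        refine (key1 u v hvu).trans ?_
        have hsplit : |u| ^ (p - 2) * |v|
            = (|u| ^ σ * |v| ^ σ) * (|u| ^ (p - 2 - σ) * |v| ^ (1 - σ)) := by
          have h1 : |u| ^ (p - 2) = |u| ^ σ * |u| ^ (p - 2 - σ) := by
            rw [← Real.rpow_add hM]; congr 1; ring
          have h2 : |v| = |v| ^ σ * |v| ^ (1 - σ) := by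
            rw [← Real.rpow_add hm, show σ + (1 - σ) = 1 by ring, Real.rpow_one]
          rw [h1]; nth_rewrite 1 [h2]; ring
        have hcomp : |u| ^ (p - 2 - σ) * |v| ^ (1 - σ) ≤ C₅ ^ (p - 1 - 2 * σ) := by
          have := compare (p - 2 - σ) (1 - σ) |v| |u| (by linarith) (by linarith) hm hvu hu
          rwa [show p - 2 - σ + (1 - σ) = p - 1 - 2 * σ by ring] at this
        calc K * |u| ^ (p - 2) * |v|
            = (|u| ^ (p - 2 - σ) * |v| ^ (1 - σ)) * K * (|u| ^ σ * |v| ^ σ) := by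
              rw [mul_assoc, hsplit]; ring
          _ ≤ C₅ ^ (p - 1 - 2 * σ) * K * (|u| ^ σ * |v| ^ σ) := by
              apply mul_le_mul_of_nonneg_right _ (by positivity)
              exact mul_le_mul_of_nonneg_right hcomp hK.le
          _ ≤ C₆ * (|u| ^ σ * |v| ^ σ) := by
              apply mul_le_mul_of_nonneg_right _ (by positivity)
              have : 0 ≤ (K + A₂) * C₅ ^ (p - 4 * σ) := by positivity
              rw [hC₆def]; linarith [mul_comm (C₅ ^ (p - 1 - 2 * σ)) K]
      · rw [hprod2]
        refine (key2 u v hvu).trans ?_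
        have hsplit1 : |u| ^ (p - 2) * |v| * |v|
            = (|u| ^ (2 * σ) * |v| ^ (2 * σ)) * (|u| ^ (p - 2 - 2 * σ) * |v| ^ (2 - 2 * σ)) := by
          have h1 : |u| ^ (p - 2) = |u| ^ (2 * σ) * |u| ^ (p - 2 - 2 * σ) := by
            rw [← Real.rpow_add hM]; congr 1; ring
          have h2 : |v| * |v| = |v| ^ (2 * σ) * |v| ^ (2 - 2 * σ) := by
            rw [← Real.rpow_add hm, show 2 * σ + (2 - 2 * σ) = 2 by ring,
              show (2:ℝ) = ((2:ℕ):ℝ) by norm_num, Real.rpow_natCast, pow_two]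
          rw [h1, mul_assoc, h2]; ring
        have hsplit2 : |u| * (|v| ^ (p - 2) * |v|)
            = (|u| ^ (2 * σ) * |v| ^ (2 * σ)) * (|u| ^ (1 - 2 * σ) * |v| ^ (p - 1 - 2 * σ)) := by
          have h1 : |u| = |u| ^ (2 * σ) * |u| ^ (1 - 2 * σ) := by
            rw [← Real.rpow_add hM, show 2 * σ + (1 - 2 * σ) = 1 by ring, Real.rpow_one]
          have h2 : |v| ^ (p - 2) * |v| = |v| ^ (2 * σ) * |v| ^ (p - 1 - 2 * σ) := by
            nth_rewrite 2 [show |v| = |v| ^ (1:ℝ) from (Real.rpow_one _).symm]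
            rw [← Real.rpow_add hm, ← Real.rpow_add hm]; congr 1; ring
          rw [h2]; nth_rewrite 1 [h1]; ring
        have hcomp1 : |u| ^ (p - 2 - 2 * σ) * |v| ^ (2 - 2 * σ) ≤ C₅ ^ (p - 4 * σ) := by
          have := compare (p - 2 - 2 * σ) (2 - 2 * σ) |v| |u| (by linarith) (by linarith) hm hvu hu
          rwa [show p - 2 - 2 * σ + (2 - 2 * σ) = p - 4 * σ by ring] at this
        have hcomp2 : |u| ^ (1 - 2 * σ) * |v| ^ (p - 1 - 2 * σ) ≤ C₅ ^ (p - 4 * σ) := by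
          have := compare (1 - 2 * σ) (p - 1 - 2 * σ) |v| |u| (by linarith) (by linarith) hm hvu hu
          rwa [show 1 - 2 * σ + (p - 1 - 2 * σ) = p - 4 * σ by ring] at this
        have hP : 0 ≤ |u| ^ (2 * σ) * |v| ^ (2 * σ) := by positivity
        calc (K * |u| ^ (p - 2) * |v| + A₂ * |u| * |v| ^ (p - 2)) * |v|
            = (|u| ^ (p - 2) * |v| * |v|) * K + (|u| * (|v| ^ (p - 2) * |v|)) * A₂ := by ring
          _ = ((|u| ^ (2 * σ) * |v| ^ (2 * σ)) * (|u| ^ (p - 2 - 2 * σ) * |v| ^ (2 - 2 * σ))) * K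
              + ((|u| ^ (2 * σ) * |v| ^ (2 * σ)) * (|u| ^ (1 - 2 * σ) * |v| ^ (p - 1 - 2 * σ))) * A₂ := by
              rw [hsplit1, hsplit2]
          _ ≤ ((|u| ^ (2 * σ) * |v| ^ (2 * σ)) * C₅ ^ (p - 4 * σ)) * K
              + ((|u| ^ (2 * σ) * |v| ^ (2 * σ)) * C₅ ^ (p - 4 * σ)) * A₂ := by
              apply add_le_add
              · exact mul_le_mul_of_nonneg_right
                  (mul_le_mul_of_nonneg_left hcomp1 hP) hK.le
              · exact mul_le_mul_of_nonneg_right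
                  (mul_le_mul_of_nonneg_left hcomp2 hP) hA₂.le
          _ = ((K + A₂) * C₅ ^ (p - 4 * σ)) * (|u| ^ (2 * σ) * |v| ^ (2 * σ)) := by ring
          _ ≤ C₆ * (|u| ^ (2 * σ) * |v| ^ (2 * σ)) := by
              apply mul_le_mul_of_nonneg_right _ hP
              rw [hC₆def]
              have : 0 ≤ K * C₅ ^ (p - 1 - 2 * σ) := by positivity
              linarith
  intro u v hu hv
  rcases le_total |v| |u| with h | h
  · exact main u v hu hv h
  · have hm := main v u hv hu h
    constructor
    · have e : f (u + v) - f u - f v = f (v + u) - f v - f u := by rw [add_comm]; ring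
      rw [e, show u * v = v * u from mul_comm u v]
      exact hm.1
    · have e : F (u + v) - F u - F v - f u * v - f v * u
          = F (v + u) - F v - F u - f v * u - f u * v := by rw [add_comm]; ring
      rw [e, show u * v = v * u from mul_comm u v]
      exact hm.2
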